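/- In the Poisson–Gamma example (A Poisson of rate λ, B Gamma with parameters r, μ), the exponent δ_n = γ_n(θ_n) − θ_n u n satisfies, with ϱ = λr/(μu) and v_k as in the log-expansion of θ_n: δ_n = (1 − ϱ + log ϱ)·u·n + Σ_{k≥2} v̄_k φ_n ψ_n^k, where v̄_k = −(r v_k + u v_{k−1}); in particular the leading coefficient satisfies −r v₁ = (1 − ϱ)u = b α(θ*). -/

import Mathlib

open Real

theorem stmt16 (lam r μ u φ ψ ζ1 ζ2 ϱ : ℝ) (v : ℕ → ℝ) (γn : ℝ → ℝ) (θn : ℝ)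
    (hlam : 0 < lam) (hr : 0 < r) (hμ : 0 < μ) (hu : 0 < u)
    (hφ : 0 < φ) (hψ : 0 < ψ)
    (hζ1 : ζ1 = lam / μ) (hζ2 : ζ2 = u / r)
    (hϱ : ϱ = lam * r / (μ * u)) (hϱlt : ϱ < 1)
    (hψ1 : ψ < 1 / ζ1) (hψ2 : ψ < 1 / ζ2)
    (hv : ∀ k : ℕ, 1 ≤ k → v k = (-1 : ℝ) ^ (k + 1) / k * (ζ1 ^ k - ζ2 ^ k))
    (hγn : γn = fun θ => r * φ * Real.log (μ / (μ - lam * (Real.exp θ - 1) * ψ)))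
    (hθn : θn = Real.log ((μ * u + lam * ψ * u) / (lam * r + lam * ψ * u))) :
    (-(r * v 1) = (1 - ϱ) * u
      ∧ (1 - ϱ) * u = (r / μ) * (lam * (Real.exp (Real.log (1 / ϱ)) - 1)))
    ∧ HasSum
        (fun k : ℕ => -(r * v (k + 2) + u * v (k + 1)) * (φ * ψ ^ (k + 2)))
        (γn θn - θn * u * (φ * ψ) - (1 - ϱ + Real.log ϱ) * u * (φ * ψ)) := by
  have hζ1pos : 0 < ζ1 := by rw [hζ1]; positivity
  have hζ2pos : 0 < ζ2 := by rw [hζ2]; positivity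
  have hϱpos : 0 < ϱ := by rw [hϱ]; positivity
  set x : ℝ := ζ1 * ψ with hx
  set y : ℝ := ζ2 * ψ with hy
  have hxpos : 0 < x := mul_pos hζ1pos hψ
  have hypos : 0 < y := mul_pos hζ2pos hψ
  have hx1 : x < 1 := by
    have := (mul_lt_mul_iff_right₀ hζ1pos).2 hψ1
    rwa [mul_one_div, div_self hζ1pos.ne'] at this
  have hy1 : y < 1 := by
    have := (mul_lt_mul_iff_right₀ hζ2pos).2 hψ2
    rwa [mul_one_div, div_self hζ2pos.ne'] at this
  have habsx : |(-x)| < 1 := by rw [abs_neg, abs_of_pos hxpos]; exact hx1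
  have habsy : |(-y)| < 1 := by rw [abs_neg, abs_of_pos hypos]; exact hy1
  -- v 1 computation
  have hv1 : v 1 = ζ1 - ζ2 := by rw [hv 1 le_rfl]; norm_num
  have hfirst : -(r * v 1) = (1 - ϱ) * u := by
    rw [hv1, hζ1, hζ2, hϱ]; field_simp; ring
  have hsecond : (1 - ϱ) * u = (r / μ) * (lam * (Real.exp (Real.log (1 / ϱ)) - 1)) := by
    rw [Real.exp_log (by positivity), hϱ]
    field_simp
  refine ⟨⟨hfirst, hsecond⟩, ?_⟩
  -- Series for S = log(1+x) - log(1+y)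
  set S : ℝ := Real.log (1 + x) - Real.log (1 + y) with hS
  have hA := hasSum_pow_div_log_of_abs_lt_one habsx
  have hB := hasSum_pow_div_log_of_abs_lt_one habsy
  -- f k = v (k+1) * ψ^(k+1)
  have hf : HasSum (fun k : ℕ => v (k + 1) * ψ ^ (k + 1)) S := by
    have h := hA.neg.add hB
    have heq : (fun k : ℕ => -((-x) ^ (k + 1) / (k + 1)) + (-y) ^ (k + 1) / (k + 1))
        = fun k : ℕ => v (k + 1) * ψ ^ (k + 1) := by
      funext k
      rw [hv (k + 1) (Nat.le_add_left 1 k)]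
      push_cast
      rw [hx, hy]
      have hpow : ∀ t : ℝ, (-(t : ℝ)) ^ (k + 1) = (-1 : ℝ) ^ (k + 1) * t ^ (k + 1) := by
        intro t; rw [neg_pow]
      rw [hpow, hpow]
      have : ((-1 : ℝ) ^ (k + 1 + 1)) = -(-1 : ℝ) ^ (k + 1) := by ring
      rw [this]
      field_simp
      ring
    rw [heq] at h
    rw [show S = - -Real.log (1 - -x) + -Real.log (1 - -y) by
      rw [hS, sub_neg_eq_add, sub_neg_eq_add]; ring]
    exact h
  -- shifted series
  have hf0 : v (0 + 1) * ψ ^ (0 + 1) = v 1 * ψ := by norm_num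
  have hshift : HasSum (fun k : ℕ => v (k + 2) * ψ ^ (k + 2)) (S - v 1 * ψ) := by
    have h2 : HasSum (fun k : ℕ => v (k + 1) * ψ ^ (k + 1))
        ((S - v 1 * ψ) + ∑ i ∈ Finset.range 1, v (i + 1) * ψ ^ (i + 1)) := by
      rw [Finset.range_one, Finset.sum_singleton, hf0, sub_add_cancel]
      exact hf
    have := (hasSum_nat_add_iff (f := fun k : ℕ => v (k + 1) * ψ ^ (k + 1)) 1).2 h2
    exact this
  -- combine
  have hcomb := ((hshift.mul_left (-(r * φ))).add (hf.mul_left (-(u * φ * ψ))))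
  have heq2 : (fun k : ℕ => -(r * φ) * (v (k + 2) * ψ ^ (k + 2)) + -(u * φ * ψ) * (v (k + 1) * ψ ^ (k + 1)))
      = fun k : ℕ => -(r * v (k + 2) + u * v (k + 1)) * (φ * ψ ^ (k + 2)) := by
    funext k; ring
  rw [heq2] at hcomb
  -- evaluate γn θn and θn
  have hne1 : lam * r + lam * ψ * u ≠ 0 := by positivity
  have hargpos : 0 < (μ * u + lam * ψ * u) / (lam * r + lam * ψ * u) := by positivity
  have hexpθ : Real.exp θn = (μ * u + lam * ψ * u) / (lam * r + lam * ψ * u) := by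
    rw [hθn, Real.exp_log hargpos]
  have hγval : γn θn = -(r * φ) * S := by
    rw [hγn]
    simp only
    have hinner : μ - lam * (Real.exp θn - 1) * ψ = lam * r * (μ + lam * ψ) / (lam * r + lam * ψ * u) := by
      rw [hexpθ]; field_simp; ring
    have : μ / (μ - lam * (Real.exp θn - 1) * ψ) = (1 + y) / (1 + x) := by
      rw [hinner, hx, hy, hζ1, hζ2]
      field_simp
    rw [this, Real.log_div (by positivity) (by positivity), hS]
    ring
  have hθval : θn = -Real.log ϱ + S := by
    have harg : (μ * u + lam * ψ * u) / (lam * r + lam * ψ * u) = ϱ⁻¹ * ((1 + x) / (1 + y)) := by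
      rw [hϱ, hx, hy, hζ1, hζ2]
      field_simp
    rw [hθn, harg, Real.log_mul (by positivity) (by positivity), Real.log_inv,
      Real.log_div (by positivity) (by positivity), hS]
  -- final algebra
  have hfinal : -(r * φ) * (S - v 1 * ψ) + -(u * φ * ψ) * S
      = γn θn - θn * u * (φ * ψ) - (1 - ϱ + Real.log ϱ) * u * (φ * ψ) := by
    rw [hγval, hθval]
    have hrv1 : r * v 1 = -((1 - ϱ) * u) := by linarith [hfirst]
    linear_combination (φ * ψ) * hrv1
  rwa [hfinal] at hcomb
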